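/- Let L : E → ℝ be twice continuously differentiable and fix τ ∈ ℝ. Then the look-ahead objective L_R^τ is differentiable at every θ ∈ E, and its gradient satisfies ∇L_R^τ(θ) = g′ − τ · H(θ)(g′), where g′ = ∇L(θ − τ∇L(θ)); i.e., ∇L_R^τ(θ) = (id − τH(θ)) ∇L(θ − τ∇L(θ)). -/

import Mathlib

open Asymptotics Filter RealInnerProductSpace

open InnerProductSpace

/-- Let `L : E → ℝ` be twice continuously differentiable and fix `τ : ℝ`.
Then the look-ahead objective `L_R^τ : θ ↦ L (θ - τ • ∇L θ)` is differentiable at every `θ`,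
with gradient `(id - τ H θ) (∇L (θ - τ • ∇L θ))`, where `H θ = fderiv ℝ (gradient L) θ`
is the Hessian of `L` at `θ`. -/
theorem rankformer_gradient_formula
    {E : Type*} [NormedAddCommGroup E] [InnerProductSpace ℝ E] [FiniteDimensional ℝ E]
    (L : E → ℝ) (hL : ContDiff ℝ 2 L) (τ : ℝ) (θ : E) :
    HasGradientAt (fun θ' => L (θ' - τ • gradient L θ'))
      (gradient L (θ - τ • gradient L θ)
        - τ • (fderiv ℝ (gradient L) θ) (gradient L (θ - τ • gradient L θ))) θ := by
  have hL1 : Differentiable ℝ L := hL.differentiable two_ne_zero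
  have hfd : ContDiff ℝ 1 (fderiv ℝ L) := hL.fderiv_right (le_refl _)
  have hgradeq : gradient L = fun x => (toDual ℝ E).symm (fderiv ℝ L x) := rfl
  have hgrad : Differentiable ℝ (gradient L) := by
    rw [hgradeq]
    exact fun x => ((toDual ℝ E).symm.differentiableAt).comp x
      ((hfd.differentiable one_ne_zero) x)
  set g' := gradient L (θ - τ • gradient L θ) with hg'
  set A := fderiv ℝ (gradient L) θ with hA
  set B := fderiv ℝ (fderiv ℝ L) θ with hB
  have hB' : HasFDerivAt (fderiv ℝ L) B θ := (hfd.differentiable one_ne_zero θ).hasFDerivAt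
  have hsec : ∀ v w : E, B v w = B w v :=
    second_derivative_symmetric (fun y => (hL1 y).hasFDerivAt) hB'
  -- ⟪w, A v⟫ = B v w
  have hkey : ∀ v w : E, ⟪w, A v⟫ = B v w := by
    intro v w
    have h1 : HasFDerivAt (fun x => ⟪w, gradient L x⟫)
        ((innerSL ℝ w).comp A) θ :=
      (innerSL ℝ w).hasFDerivAt.comp θ (hgrad θ).hasFDerivAt
    have h2 : HasFDerivAt (fun x => (fderiv ℝ L x) w)
        ((ContinuousLinearMap.apply ℝ ℝ w).comp B) θ :=
      (ContinuousLinearMap.apply ℝ ℝ w).hasFDerivAt.comp θ hB'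
    have heq : (fun x => ⟪w, gradient L x⟫) = (fun x => (fderiv ℝ L x) w) := by
      funext x
      rw [hgradeq, real_inner_comm]
      exact toDual_symm_apply
    rw [heq] at h1
    have := h1.unique h2
    have := congrFun (congrArg DFunLike.coe this) v
    simpa using this
  have hsymm : ∀ v w : E, ⟪w, A v⟫ = ⟪v, A w⟫ := by
    intro v w
    rw [hkey v w, hkey w v, hsec]
  have hφ : HasFDerivAt (fun θ' => θ' - τ • gradient L θ')
      (ContinuousLinearMap.id ℝ E - τ • A) θ :=
    (hasFDerivAt_id θ).sub ((hgrad θ).hasFDerivAt.const_smul τ)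
  have hLat : HasFDerivAt L (toDual ℝ E g') (θ - τ • gradient L θ) :=
    ((hL1 _).hasGradientAt).hasFDerivAt
  have hcomp := hLat.comp θ hφ
  rw [hasGradientAt_iff_hasFDerivAt]
  have hdual : (toDual ℝ E) (g' - τ • A g')
      = ((toDual ℝ E) g').comp (ContinuousLinearMap.id ℝ E - τ • A) := by
    ext v
    simp only [ContinuousLinearMap.comp_apply, ContinuousLinearMap.sub_apply,
      ContinuousLinearMap.smul_apply, ContinuousLinearMap.id_apply, toDual_apply_apply,
      inner_sub_left, inner_sub_right, real_inner_smul_left, real_inner_smul_right]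
    linear_combination τ * real_inner_comm (A g') v + (-τ) * hsymm g' v
  rw [hdual]
  exact hcomp
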